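/- Let m, h be positive integers and q_n the semi-regular denominators. Assume a_m = 1 and a_{m+k} = -1 for 1 ≤ k ≤ h. Then q_{m+h} ≥ (b_{m+h}/(h+1)) q_{m+h-1}. -/

import Mathlib

theorem srcf_negative_run_final_growth (a b q : ℤ → ℤ) (m h : ℤ)
    (ha : ∀ n : ℤ, 1 ≤ n → a n = 1 ∨ a n = -1)
    (hb : ∀ n : ℤ, 1 ≤ n → 1 ≤ b n)
    (hba : ∀ n : ℤ, 1 ≤ n → 1 ≤ b n + a (n + 1))
    (hqm1 : q (-1) = 0) (hq0 : q 0 = 1)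
    (hq : ∀ n : ℤ, 1 ≤ n → q n = b n * q (n - 1) + a n * q (n - 2))
    (hm : 1 ≤ m) (hh : 1 ≤ h)
    (ham : a m = 1)
    (harun : ∀ k : ℤ, 1 ≤ k → k ≤ h → a (m + k) = -1) :
    ((b (m + h) : ℝ) / (h + 1 : ℝ)) * (q (m + h - 1) : ℝ) ≤ (q (m + h) : ℝ) := by
  -- positivity invariant
  have pos : ∀ n : ℤ, 0 ≤ n → 1 ≤ q n ∧ 1 ≤ q n + a (n + 1) * q (n - 1) := by
    refine Int.le_induction (motive := fun n _ => 1 ≤ q n ∧ 1 ≤ q n + a (n + 1) * q (n - 1)) ?_ ?_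
    · norm_num [hq0, hqm1]
    · intro n hn ih
      obtain ⟨ih1, ih2⟩ := ih
      have hb1 : 1 ≤ b (n + 1) := hb _ (by linarith)
      have hrec : q (n + 1) = b (n + 1) * q n + a (n + 1) * q (n - 1) := by
        have e := hq (n + 1) (by linarith)
        rw [show n + 1 - 1 = n from by ring, show n + 1 - 2 = n - 1 from by ring] at e
        exact e
      have h1 : 1 ≤ q (n + 1) := by nlinarith
      refine ⟨h1, ?_⟩
      rw [show n + 1 + 1 = n + 2 from by ring, show n + 1 - 1 = n from by ring]
      rcases ha (n + 2) (by linarith) with h2 | h2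
      · rw [h2]; nlinarith
      · have hb2 : 2 ≤ b (n + 1) := by
          have e := hba (n + 1) (by linarith)
          rw [show n + 1 + 1 = n + 2 from by ring, h2] at e
          linarith
        rw [h2]; nlinarith
  have qnn : ∀ n : ℤ, -1 ≤ n → 0 ≤ q n := by
    intro n hn
    rcases lt_or_ge n 0 with hlt | hge
    · have : n = -1 := by omega
      rw [this, hqm1]
    · linarith [(pos n hge).1]
  -- growth inside the negative run
  have key : ∀ k : ℤ, 0 ≤ k → k ≤ h - 1 → (k + 2) * q (m + k - 1) ≤ (k + 1) * q (m + k) := by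
    refine Int.le_induction
      (motive := fun k _ => k ≤ h - 1 → (k + 2) * q (m + k - 1) ≤ (k + 1) * q (m + k)) ?_ ?_
    · intro _
      have ha1 : a (m + 1) = -1 := harun 1 le_rfl hh
      have hbm : 2 ≤ b m := by have e := hba m hm; rw [ha1] at e; linarith
      have hrec : q m = b m * q (m - 1) + q (m - 2) := by
        have e := hq m hm; rw [ham] at e; linarith
      have h1 : 0 ≤ q (m - 2) := qnn _ (by omega)
      have h2 : 0 ≤ q (m - 1) := qnn _ (by omega)
      have h3 : (2 : ℤ) * q (m - 1) ≤ q m := by nlinarith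
      rw [show m + (0 : ℤ) - 1 = m - 1 from by ring, show m + (0 : ℤ) = m from by ring]
      linarith
    · intro k hk ih hk1
      have ihh := ih (by linarith)
      have hak : a (m + k + 1) = -1 := by
        rw [show m + k + 1 = m + (k + 1) from by ring]
        exact harun (k + 1) (by linarith) (by linarith)
      have hbk : 2 ≤ b (m + k + 1) := by
        have e := hba (m + k + 1) (by linarith)
        have ha2 : a (m + k + 1 + 1) = -1 := by
          rw [show m + k + 1 + 1 = m + (k + 2) from by ring]
          exact harun (k + 2) (by linarith) (by linarith)
        rw [ha2] at e; linarith
      have hrec : q (m + k + 1) = b (m + k + 1) * q (m + k) - q (m + k - 1) := by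
        have e := hq (m + k + 1) (by linarith)
        rw [show m + k + 1 - 1 = m + k from by ring,
          show m + k + 1 - 2 = m + k - 1 from by ring, hak] at e
        linarith
      have hQ : 1 ≤ q (m + k) := (pos _ (by linarith)).1
      rw [show m + (k + 1) - 1 = m + k from by ring, show m + (k + 1) = m + k + 1 from by ring]
      nlinarith [mul_nonneg (show (0 : ℤ) ≤ k + 2 by linarith)
        (mul_nonneg (show (0 : ℤ) ≤ b (m + k + 1) - 2 by linarith)
          (show (0 : ℤ) ≤ q (m + k) by linarith))]
  -- final step
  have hah : a (m + h) = -1 := harun h hh le_rfl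
  have hbh : 1 ≤ b (m + h) := hb _ (by linarith)
  have hrec : q (m + h) = b (m + h) * q (m + h - 1) - q (m + h - 2) := by
    have e := hq (m + h) (by linarith)
    rw [show m + h - 2 = m + h - 2 from rfl, hah] at e
    linarith
  have k1 := key (h - 1) (by linarith) (by linarith)
  rw [show m + (h - 1) - 1 = m + h - 2 from by ring,
    show m + (h - 1) = m + h - 1 from by ring] at k1
  have hQ1 : 1 ≤ q (m + h - 1) := (pos _ (by linarith)).1
  have e1 : (h + 1) * q (m + h) =
      (h + 1) * b (m + h) * q (m + h - 1) - (h + 1) * q (m + h - 2) := by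
    rw [hrec]; ring
  have main : b (m + h) * q (m + h - 1) ≤ (h + 1) * q (m + h) := by
    nlinarith [k1, e1, mul_nonneg (mul_nonneg (show (0 : ℤ) ≤ h by linarith)
      (show (0 : ℤ) ≤ b (m + h) - 1 by linarith)) (show (0 : ℤ) ≤ q (m + h - 1) by linarith)]
  have hpos : (0 : ℝ) < (h : ℝ) + 1 := by
    have : (1 : ℝ) ≤ (h : ℝ) := by exact_mod_cast hh
    linarith
  rw [div_mul_eq_mul_div, div_le_iff₀ hpos]
  have main' : (b (m + h) * q (m + h - 1) : ℤ) ≤ q (m + h) * (h + 1) := by linarith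
  exact_mod_cast main'
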